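/- For a uniformly random function f: {0,1}^n → {0,1} and the full phase state |ψ_f⟩ = 2^{−n/2} Σ_{x∈{0,1}^n} (−1)^{f(x)}|x⟩, the expected linearized 2-stabilizer purity satisfies E_f[2^{−M₂(ψ_f)}] = E_f[ 2^{−n} Σ_{P∈𝔓_n} tr⁴(P ψ_f) ] ≤ 20/2^n. -/

import Mathlib

open scoped BigOperators
open ComplexConjugate
open scoped ComplexOrder

noncomputable def traceNorm {ι : Type*} [Fintype ι] [DecidableEq ι] (A : Matrix ι ι ℂ) : ℝ :=
  (((Matrix.posSemidef_conjTranspose_mul_self A).1.eigenvectorUnitary : Matrix ι ι ℂ) *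
      Matrix.diagonal ((fun r : ℝ => (r : ℂ)) ∘ Real.sqrt ∘ (Matrix.posSemidef_conjTranspose_mul_self A).1.eigenvalues) *
      (star (Matrix.posSemidef_conjTranspose_mul_self A).1.eigenvectorUnitary : Matrix ι ι ℂ)).trace.re

noncomputable def proj {ι : Type*} (v : ι → ℂ) : Matrix ι ι ℂ :=
  Matrix.of fun i j => v i * conj (v j)

noncomputable def tensorPow {ι : Type*} (A : Matrix ι ι ℂ) (t : ℕ) :
    Matrix (Fin t → ι) (Fin t → ι) ℂ :=
  Matrix.of fun x y => ∏ i, A (x i) (y i)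

noncomputable def pauli {n : ℕ} (a b : Fin n → ZMod 2) :
    Matrix (Fin n → ZMod 2) (Fin n → ZMod 2) ℂ :=
  Matrix.of fun x y =>
    if x = y + a then
      Complex.I ^ (∑ i, (a i * b i).val) * (-1 : ℂ) ^ (∑ i, (b i * y i).val)
    else 0

noncomputable def xi {n : ℕ} (ρ : Matrix (Fin n → ZMod 2) (Fin n → ZMod 2) ℂ)
    (p : (Fin n → ZMod 2) × (Fin n → ZMod 2)) : ℝ :=
  Complex.normSq ((pauli p.1 p.2 * ρ).trace) / 2 ^ n

/-- The full phase state |ψ_f⟩ = 2^{−n/2} Σ_x (−1)^{f(x)} |x⟩. -/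
noncomputable def phaseState {n : ℕ} (f : (Fin n → ZMod 2) → ZMod 2) :
    (Fin n → ZMod 2) → ℂ :=
  fun x => (-1 : ℂ) ^ (f x).val / (Real.sqrt ((2 : ℝ) ^ n) : ℂ)

/-- The 2-stabilizer entropy M₂(ψ) = −log₂(2^{−n} Σ_P tr⁴(Pψ)). -/
noncomputable def M2 {n : ℕ} (ρ : Matrix (Fin n → ZMod 2) (Fin n → ZMod 2) ℂ) : ℝ :=
  - Real.logb 2 (((2 : ℝ) ^ n)⁻¹ *
    ∑ p : (Fin n → ZMod 2) × (Fin n → ZMod 2), (((pauli p.1 p.2 * ρ).trace).re) ^ 4)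

/-! ### Auxiliary machinery -/

noncomputable def χ (x : ZMod 2) : ℝ := (-1) ^ x.val
lemma zmod2_cases (x : ZMod 2) : x = 0 ∨ x = 1 := by revert x; decide
@[simp] lemma chi_zero : χ 0 = 1 := by norm_num [χ]
lemma chi_add (x y : ZMod 2) : χ (x + y) = χ x * χ y := by
  rcases zmod2_cases x with h | h <;> rcases zmod2_cases y with h' | h' <;>
    subst h <;> subst h' <;>
      norm_num [χ, show ZMod.val (2 : ZMod 2) = 0 from rfl,
        show ZMod.val (1 : ZMod 2) = 1 from rfl]
lemma chi_abs (x : ZMod 2) : |χ x| = 1 := by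
  rcases zmod2_cases x with h | h <;> subst h <;>
    norm_num [χ, show ZMod.val (1 : ZMod 2) = 1 from rfl]
lemma chi_sum {ι : Type*} (s : Finset ι) (h : ι → ZMod 2) :
    χ (∑ i ∈ s, h i) = ∏ i ∈ s, χ (h i) := by
  classical
  induction s using Finset.cons_induction with
  | empty => simp
  | cons a s ha ih => rw [Finset.sum_cons, Finset.prod_cons, chi_add, ih]
lemma sum_zmod2 (F : ZMod 2 → ℝ) : ∑ c, F c = F 0 + F 1 := by
  have : (Finset.univ : Finset (ZMod 2)) = {0, 1} := by decide
  rw [this]; simp [Finset.sum_insert]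
lemma char_sum {A : Type*} [Fintype A] [DecidableEq A] (g : A → ZMod 2) :
    ∑ f : A → ZMod 2, χ (∑ z, g z * f z)
      = if g = 0 then (Fintype.card (A → ZMod 2) : ℝ) else 0 := by
  classical
  have h1 : ∀ f : A → ZMod 2, χ (∑ z, g z * f z) = ∏ z, χ (g z * f z) :=
    fun f => chi_sum _ _
  simp_rw [h1]
  have key := Finset.prod_univ_sum (t := fun _ : A => (Finset.univ : Finset (ZMod 2)))
    (f := fun z c => χ (g z * c))
  rw [Fintype.piFinset_univ] at key
  rw [← key]
  have h2 : ∀ z, ∑ c : ZMod 2, χ (g z * c) = if g z = 0 then 2 else 0 := by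
    intro z
    rw [sum_zmod2]
    rcases zmod2_cases (g z) with h | h <;> rw [h] <;>
      norm_num [χ, show ZMod.val (1 : ZMod 2) = 1 from rfl]
  simp_rw [h2]
  by_cases hg : g = 0
  · rw [if_pos hg]; subst hg; simp [Fintype.card_fun]
  · rw [if_neg hg]
    obtain ⟨z, hz⟩ := Function.ne_iff.mp hg
    exact Finset.prod_eq_zero (Finset.mem_univ z) (by simpa using hz)

@[reducible] def DD (n : ℕ) := Fin n → ZMod 2

noncomputable def Sf {n : ℕ} (f : DD n → ZMod 2) (a b : DD n) : ℝ :=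
  ∑ y : DD n, χ ((∑ i, b i * y i) + f y + f (y + a))

lemma neg_one_pow_sum_val {ι : Type*} (s : Finset ι) (h : ι → ZMod 2) :
    (-1 : ℂ) ^ (∑ i ∈ s, (h i).val) = (-1 : ℂ) ^ (∑ i ∈ s, h i).val := by
  rw [neg_one_pow_eq_pow_mod_two, neg_one_pow_eq_pow_mod_two (n := (∑ i ∈ s, h i).val)]
  congr 1
  have h1 : ((∑ i ∈ s, (h i).val : ℕ) : ZMod 2) = ∑ i ∈ s, h i := by
    push_cast [ZMod.natCast_val, ZMod.cast_id']
    rfl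
  rw [Nat.mod_eq_of_lt (ZMod.val_lt _), ← h1, ZMod.val_natCast]

lemma chi_cast (x : ZMod 2) : ((χ x : ℝ) : ℂ) = (-1 : ℂ) ^ x.val := by
  simp [χ]

lemma trace_eq {n : ℕ} (f : (Fin n → ZMod 2) → ZMod 2) (a b : Fin n → ZMod 2) :
    (pauli a b * proj (phaseState f)).trace
      = Complex.I ^ (∑ i, (a i * b i).val) * ((Sf f a b / 2 ^ n : ℝ) : ℂ) := by
  classical
  have hs : (Real.sqrt ((2:ℝ)^n) : ℂ) * (Real.sqrt ((2:ℝ)^n) : ℂ) = ((2:ℝ)^n : ℂ) := by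
    rw [← Complex.ofReal_mul, Real.mul_self_sqrt (by positivity)]
    push_cast
    ring
  have h2n : ((2:ℝ)^n : ℂ) ≠ 0 := by
    norm_num
  rw [Matrix.trace]
  simp only [Matrix.diag, Matrix.mul_apply, pauli, proj, phaseState, Matrix.of_apply]
  rw [Finset.sum_comm]
  have hrow : ∀ y : Fin n → ZMod 2,
      (∑ x : Fin n → ZMod 2,
        (if x = y + a then
          Complex.I ^ (∑ i, (a i * b i).val) * (-1 : ℂ) ^ (∑ i, (b i * y i).val) else 0) *
          ((-1 : ℂ) ^ (f y).val / (Real.sqrt ((2 : ℝ) ^ n) : ℂ) *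
            conj ((-1 : ℂ) ^ (f x).val / (Real.sqrt ((2 : ℝ) ^ n) : ℂ))))
      = Complex.I ^ (∑ i, (a i * b i).val) *
          ((χ ((∑ i, b i * y i) + f y + f (y + a)) / 2 ^ n : ℝ) : ℂ) := by
    intro y
    simp only [ite_mul, zero_mul]
    rw [Finset.sum_ite_eq' Finset.univ (y + a)]
    simp only [Finset.mem_univ, if_true]
    have hconj : conj ((-1 : ℂ) ^ (f (y+a)).val / (Real.sqrt ((2 : ℝ) ^ n) : ℂ))
        = (-1 : ℂ) ^ (f (y+a)).val / (Real.sqrt ((2 : ℝ) ^ n) : ℂ) := by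
      simp [map_div₀, map_pow]
    rw [hconj, chi_add, chi_add]
    push_cast [chi_cast]
    rw [div_mul_div_comm, hs]
    rw [neg_one_pow_sum_val]
    field_simp
    ring
    norm_num
  rw [Finset.sum_congr rfl fun y _ => hrow y]
  rw [← Finset.mul_sum, Sf]
  push_cast
  rw [Finset.sum_div, ← Finset.sum_div]

section Comb
variable {n : ℕ}
def ind (u z : DD n) : ZMod 2 := if z = u then 1 else 0
variable (a : DD n)
noncomputable def Ipair (u v : DD n) : ℝ := if v = u ∨ v = u + a then 1 else 0
lemma Ipair_nonneg (u v : DD n) : 0 ≤ Ipair a u v := by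
  unfold Ipair; split <;> norm_num
lemma haa : a + a = 0 := by funext i; exact CharTwo.add_self_eq_zero _
lemma hsym (x y : DD n) : x = y + a ↔ y = x + a := by
  constructor <;> rintro rfl <;> rw [add_assoc, haa, add_zero]
lemma pair_cancel (y1 y2 : DD n) (h : y2 = y1 ∨ y2 = y1 + a) (z : DD n) :
    ind y1 z + ind (y1 + a) z + ind y2 z + ind (y2 + a) z = 0 := by
  have key : ∀ u v : ZMod 2, u + v + u + v = 0 := by decide
  have key2 : ∀ u v : ZMod 2, u + v + v + u = 0 := by decide
  rcases h with rfl | rfl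
  · exact key _ _
  · rw [add_assoc y1 a a, haa, add_zero]
    exact key2 _ _
lemma cardDD : (Fintype.card (DD n) : ℝ) = 2 ^ n := by
  simp [DD, Fintype.card_fun, ZMod.card]
variable (ha : a ≠ 0)
include ha
lemma self_ne (x : DD n) : x ≠ x + a := by
  intro h
  apply ha
  have h2 : x + 0 = x + a := by rw [add_zero]; exact h
  exact (add_left_cancel h2).symm
lemma two_pair (y3 y4 : DD n)
    (h : ∀ z, ind y3 z + ind (y3 + a) z + ind y4 z + ind (y4 + a) z = 0) :
    y4 = y3 ∨ y4 = y3 + a := by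
  by_contra hc
  push_neg at hc
  obtain ⟨h1, h2⟩ := hc
  have h3 := h y3
  have e1 : ind y3 y3 = 1 := if_pos rfl
  have e2 : ind (y3 + a) y3 = 0 := if_neg (self_ne a ha y3)
  have e3 : ind y4 y3 = 0 := if_neg (fun hh : y3 = y4 => h1 hh.symm)
  have e4 : ind (y4 + a) y3 = 0 := if_neg (fun hh : y3 = y4 + a => h2 ((hsym a y3 y4).mp hh))
  rw [e1, e2, e3, e4] at h3
  simp at h3
lemma pairing (y1 y2 y3 y4 : DD n)
    (hg : ∀ z, ind y1 z + ind (y1 + a) z + ind y2 z + ind (y2 + a) z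
      + ind y3 z + ind (y3 + a) z + ind y4 z + ind (y4 + a) z = 0) :
    ((y2 = y1 ∨ y2 = y1 + a) ∧ (y4 = y3 ∨ y4 = y3 + a)) ∨
    ((y3 = y1 ∨ y3 = y1 + a) ∧ (y4 = y2 ∨ y4 = y2 + a)) ∨
    ((y4 = y1 ∨ y4 = y1 + a) ∧ (y3 = y2 ∨ y3 = y2 + a)) := by
  have hfirst : (y2 = y1 ∨ y2 = y1 + a) ∨ (y3 = y1 ∨ y3 = y1 + a) ∨
      (y4 = y1 ∨ y4 = y1 + a) := by
    by_contra hc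
    push_neg at hc
    obtain ⟨⟨h1, h2⟩, ⟨h3, h4⟩, h5, h6⟩ := hc
    have h0 := hg y1
    rw [show ind y1 y1 = 1 from if_pos rfl,
      show ind (y1 + a) y1 = 0 from if_neg (self_ne a ha y1),
      show ind y2 y1 = 0 from if_neg (fun hh : y1 = y2 => h1 hh.symm),
      show ind (y2 + a) y1 = 0 from if_neg (fun hh : y1 = y2 + a => h2 ((hsym a y1 y2).mp hh)),
      show ind y3 y1 = 0 from if_neg (fun hh : y1 = y3 => h3 hh.symm),
      show ind (y3 + a) y1 = 0 from if_neg (fun hh : y1 = y3 + a => h4 ((hsym a y1 y3).mp hh)),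
      show ind y4 y1 = 0 from if_neg (fun hh : y1 = y4 => h5 hh.symm),
      show ind (y4 + a) y1 = 0 from if_neg (fun hh : y1 = y4 + a => h6 ((hsym a y1 y4).mp hh))]
      at h0
    simp at h0
  rcases hfirst with h12 | h13 | h14
  · left
    refine ⟨h12, two_pair a ha y3 y4 fun z => ?_⟩
    linear_combination (hg z) - (pair_cancel a y1 y2 h12 z)
  · right; left
    refine ⟨h13, two_pair a ha y2 y4 fun z => ?_⟩
    linear_combination (hg z) - (pair_cancel a y1 y3 h13 z)
  · right; right
    refine ⟨h14, two_pair a ha y2 y3 fun z => ?_⟩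
    linear_combination (hg z) - (pair_cancel a y1 y4 h14 z)
omit ha
lemma sumJ (u : DD n) : ∑ v : DD n, Ipair a u v ≤ 2 := by
  have h1 : ∀ v : DD n, Ipair a u v ≤
      (if v = u then (1:ℝ) else 0) + (if v = u + a then (1:ℝ) else 0) := by
    intro v
    unfold Ipair
    by_cases hv : v = u
    · subst hv; simp; split <;> norm_num
    by_cases hv' : v = u + a
    · subst hv'; simp [hv]
    · simp [hv, hv']
  calc ∑ v : DD n, Ipair a u v
      ≤ ∑ v : DD n, ((if v = u then (1:ℝ) else 0) + (if v = u + a then (1:ℝ) else 0)) :=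
        Finset.sum_le_sum fun v _ => h1 v
    _ = 2 := by
        rw [Finset.sum_add_distrib, Finset.sum_ite_eq' Finset.univ u,
          Finset.sum_ite_eq' Finset.univ (u + a)]
        norm_num
lemma sumK : ∑ u : DD n, ∑ v : DD n, Ipair a u v ≤ 2 * 2 ^ n := by
  calc ∑ u : DD n, ∑ v : DD n, Ipair a u v ≤ ∑ _u : DD n, (2:ℝ) :=
        Finset.sum_le_sum fun u _ => sumJ a u
    _ = 2 * 2 ^ n := by
        rw [Finset.sum_const, Finset.card_univ, nsmul_eq_mul, cardDD]
        ring
lemma count_bound :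
    ∑ y1 : DD n, ∑ y2 : DD n, ∑ y3 : DD n, ∑ y4 : DD n,
      (Ipair a y1 y2 * Ipair a y3 y4 + Ipair a y1 y3 * Ipair a y2 y4
        + Ipair a y1 y4 * Ipair a y2 y3) ≤ 12 * (2 ^ n) ^ 2 := by
  have hK : ∑ u : DD n, ∑ v : DD n, Ipair a u v ≤ 2 * 2 ^ n := sumK a
  have hK0 : (0:ℝ) ≤ ∑ u : DD n, ∑ v : DD n, Ipair a u v :=
    Finset.sum_nonneg fun u _ => Finset.sum_nonneg fun v _ => Ipair_nonneg a u v
  have heq : ∑ y1 : DD n, ∑ y2 : DD n, ∑ y3 : DD n, ∑ y4 : DD n,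
      (Ipair a y1 y2 * Ipair a y3 y4 + Ipair a y1 y3 * Ipair a y2 y4
        + Ipair a y1 y4 * Ipair a y2 y3)
      = 3 * (∑ u : DD n, ∑ v : DD n, Ipair a u v) * (∑ u : DD n, ∑ v : DD n, Ipair a u v) := by
    simp only [Finset.sum_add_distrib, ← Finset.mul_sum, ← Finset.sum_mul]
    ring
  rw [heq]
  nlinarith
end Comb

section Main
variable {n : ℕ}

lemma tuple_bound (a b : DD n) (ha : a ≠ 0) (y1 y2 y3 y4 : DD n) :
    ∑ f : DD n → ZMod 2,
      (χ ((∑ i, b i * y1 i) + f y1 + f (y1 + a)) * χ ((∑ i, b i * y2 i) + f y2 + f (y2 + a))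
        * χ ((∑ i, b i * y3 i) + f y3 + f (y3 + a)) * χ ((∑ i, b i * y4 i) + f y4 + f (y4 + a)))
      ≤ (Fintype.card (DD n → ZMod 2) : ℝ) *
        (Ipair a y1 y2 * Ipair a y3 y4 + Ipair a y1 y3 * Ipair a y2 y4
          + Ipair a y1 y4 * Ipair a y2 y3) := by
  classical
  set C : ℝ := (Fintype.card (DD n → ZMod 2) : ℝ) with hC
  have hC0 : (0:ℝ) ≤ C := Nat.cast_nonneg _
  set g : DD n → ZMod 2 := fun z => ind y1 z + ind (y1 + a) z + ind y2 z + ind (y2 + a) z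
      + ind y3 z + ind (y3 + a) z + ind y4 z + ind (y4 + a) z with hgdef
  have hexp : ∀ (f : DD n → ZMod 2) (u : DD n), f u = ∑ z : DD n, ind u z * f z := by
    intro f u
    simp [ind, ite_mul, Finset.sum_ite_eq']
  have hfe : ∀ f : DD n → ZMod 2,
      f y1 + f (y1 + a) + f y2 + f (y2 + a) + f y3 + f (y3 + a) + f y4 + f (y4 + a)
        = ∑ z : DD n, g z * f z := by
    intro f
    have : ∑ z : DD n, g z * f z
        = (∑ z : DD n, ind y1 z * f z) + (∑ z : DD n, ind (y1 + a) z * f z)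
          + (∑ z : DD n, ind y2 z * f z) + (∑ z : DD n, ind (y2 + a) z * f z)
          + (∑ z : DD n, ind y3 z * f z) + (∑ z : DD n, ind (y3 + a) z * f z)
          + (∑ z : DD n, ind y4 z * f z) + (∑ z : DD n, ind (y4 + a) z * f z) := by
      simp only [hgdef, add_mul, Finset.sum_add_distrib]
    rw [this, ← hexp f y1, ← hexp f (y1 + a), ← hexp f y2, ← hexp f (y2 + a),
      ← hexp f y3, ← hexp f (y3 + a), ← hexp f y4, ← hexp f (y4 + a)]
  set s : ℝ := χ (∑ i, b i * y1 i) * χ (∑ i, b i * y2 i) * χ (∑ i, b i * y3 i)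
      * χ (∑ i, b i * y4 i) with hsdef
  have hs1 : s ≤ 1 := by
    have habs : |s| = 1 := by
      rw [hsdef, abs_mul, abs_mul, abs_mul, chi_abs, chi_abs, chi_abs, chi_abs]
      norm_num
    calc s ≤ |s| := le_abs_self s
      _ = 1 := habs
  have hterm : ∀ f : DD n → ZMod 2,
      χ ((∑ i, b i * y1 i) + f y1 + f (y1 + a)) * χ ((∑ i, b i * y2 i) + f y2 + f (y2 + a))
        * χ ((∑ i, b i * y3 i) + f y3 + f (y3 + a)) * χ ((∑ i, b i * y4 i) + f y4 + f (y4 + a))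
      = s * χ (∑ z : DD n, g z * f z) := by
    intro f
    rw [← hfe f, hsdef]
    simp only [chi_add]
    ring
  rw [Finset.sum_congr rfl fun f _ => hterm f, ← Finset.mul_sum, char_sum g]
  have hmid : s * (if g = 0 then C else 0) ≤ (if g = 0 then C else 0) := by
    apply mul_le_of_le_one_left _ hs1
    split <;> simp [hC0]
  refine hmid.trans ?_
  by_cases hg0 : g = 0
  · rw [if_pos hg0]
    have hgz : ∀ z, ind y1 z + ind (y1 + a) z + ind y2 z + ind (y2 + a) z
        + ind y3 z + ind (y3 + a) z + ind y4 z + ind (y4 + a) z = 0 := by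
      intro z
      have := congrFun hg0 z
      simpa [hgdef] using this
    have hp := pairing a ha y1 y2 y3 y4 hgz
    have hsum : 1 ≤ Ipair a y1 y2 * Ipair a y3 y4 + Ipair a y1 y3 * Ipair a y2 y4
        + Ipair a y1 y4 * Ipair a y2 y3 := by
      rcases hp with ⟨h1, h2⟩ | ⟨h1, h2⟩ | ⟨h1, h2⟩
      · rw [show Ipair a y1 y2 = 1 from if_pos h1, show Ipair a y3 y4 = 1 from if_pos h2]
        nlinarith [mul_nonneg (Ipair_nonneg a y1 y3) (Ipair_nonneg a y2 y4),
          mul_nonneg (Ipair_nonneg a y1 y4) (Ipair_nonneg a y2 y3)]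
      · rw [show Ipair a y1 y3 = 1 from if_pos h1, show Ipair a y2 y4 = 1 from if_pos h2]
        nlinarith [mul_nonneg (Ipair_nonneg a y1 y2) (Ipair_nonneg a y3 y4),
          mul_nonneg (Ipair_nonneg a y1 y4) (Ipair_nonneg a y2 y3)]
      · rw [show Ipair a y1 y4 = 1 from if_pos h1, show Ipair a y2 y3 = 1 from if_pos h2]
        nlinarith [mul_nonneg (Ipair_nonneg a y1 y2) (Ipair_nonneg a y3 y4),
          mul_nonneg (Ipair_nonneg a y1 y3) (Ipair_nonneg a y2 y4)]
    nlinarith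
  · rw [if_neg hg0]
    apply mul_nonneg hC0
    have n1 := mul_nonneg (Ipair_nonneg a y1 y2) (Ipair_nonneg a y3 y4)
    have n2 := mul_nonneg (Ipair_nonneg a y1 y3) (Ipair_nonneg a y2 y4)
    have n3 := mul_nonneg (Ipair_nonneg a y1 y4) (Ipair_nonneg a y2 y3)
    linarith

lemma sum_Sf4_le (a b : DD n) (ha : a ≠ 0) :
    ∑ f : DD n → ZMod 2, Sf f a b ^ 4
      ≤ 12 * (Fintype.card (DD n → ZMod 2) : ℝ) * (2 ^ n) ^ 2 := by
  classical
  set C : ℝ := (Fintype.card (DD n → ZMod 2) : ℝ) with hC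
  have hC0 : (0:ℝ) ≤ C := Nat.cast_nonneg _
  have expand : ∀ f : DD n → ZMod 2, Sf f a b ^ 4
      = ∑ y1 : DD n, ∑ y2 : DD n, ∑ y3 : DD n, ∑ y4 : DD n,
          (χ ((∑ i, b i * y1 i) + f y1 + f (y1 + a)) * χ ((∑ i, b i * y2 i) + f y2 + f (y2 + a))
            * χ ((∑ i, b i * y3 i) + f y3 + f (y3 + a))
            * χ ((∑ i, b i * y4 i) + f y4 + f (y4 + a))) := by
    intro f
    rw [show Sf f a b ^ 4 = Sf f a b * Sf f a b * Sf f a b * Sf f a b from by ring]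
    simp only [Sf, Finset.sum_mul, Finset.mul_sum]
    exact Finset.sum_congr rfl fun y1 _ => Finset.sum_congr rfl fun y2 _ =>
      Finset.sum_congr rfl fun y3 _ => Finset.sum_congr rfl fun y4 _ => by ring
  calc ∑ f : DD n → ZMod 2, Sf f a b ^ 4
      = ∑ f : DD n → ZMod 2, ∑ y1 : DD n, ∑ y2 : DD n, ∑ y3 : DD n, ∑ y4 : DD n, _ :=
        Finset.sum_congr rfl fun f _ => expand f
    _ = ∑ y1 : DD n, ∑ f : DD n → ZMod 2, ∑ y2 : DD n, ∑ y3 : DD n, ∑ y4 : DD n, _ :=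
        Finset.sum_comm
    _ = ∑ y1 : DD n, ∑ y2 : DD n, ∑ f : DD n → ZMod 2, ∑ y3 : DD n, ∑ y4 : DD n, _ :=
        Finset.sum_congr rfl fun y1 _ => Finset.sum_comm
    _ = ∑ y1 : DD n, ∑ y2 : DD n, ∑ y3 : DD n, ∑ f : DD n → ZMod 2, ∑ y4 : DD n, _ :=
        Finset.sum_congr rfl fun y1 _ => Finset.sum_congr rfl fun y2 _ => Finset.sum_comm
    _ = ∑ y1 : DD n, ∑ y2 : DD n, ∑ y3 : DD n, ∑ y4 : DD n, ∑ f : DD n → ZMod 2, _ :=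
        Finset.sum_congr rfl fun y1 _ => Finset.sum_congr rfl fun y2 _ =>
          Finset.sum_congr rfl fun y3 _ => Finset.sum_comm
    _ ≤ ∑ y1 : DD n, ∑ y2 : DD n, ∑ y3 : DD n, ∑ y4 : DD n,
          C * (Ipair a y1 y2 * Ipair a y3 y4 + Ipair a y1 y3 * Ipair a y2 y4
            + Ipair a y1 y4 * Ipair a y2 y3) := by
        refine Finset.sum_le_sum fun y1 _ => Finset.sum_le_sum fun y2 _ =>
          Finset.sum_le_sum fun y3 _ => Finset.sum_le_sum fun y4 _ => ?_
        exact tuple_bound a b ha y1 y2 y3 y4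
    _ = C * ∑ y1 : DD n, ∑ y2 : DD n, ∑ y3 : DD n, ∑ y4 : DD n,
          (Ipair a y1 y2 * Ipair a y3 y4 + Ipair a y1 y3 * Ipair a y2 y4
            + Ipair a y1 y4 * Ipair a y2 y3) := by
        simp only [← Finset.mul_sum]
    _ ≤ C * (12 * (2 ^ n) ^ 2) := mul_le_mul_of_nonneg_left (count_bound a) hC0
    _ = 12 * C * (2 ^ n) ^ 2 := by ring

lemma Sf_zero (f : DD n → ZMod 2) (b : DD n) :
    Sf f 0 b = if b = 0 then (2:ℝ) ^ n else 0 := by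
  unfold Sf
  have h1 : ∀ y : DD n, (∑ i, b i * y i) + f y + f (y + 0) = ∑ i, b i * y i := by
    intro y
    rw [add_zero y, add_assoc, CharTwo.add_self_eq_zero (f y), add_zero]
  rw [Finset.sum_congr rfl fun y _ => congrArg χ (h1 y)]
  rw [char_sum (A := Fin n) b]
  have hc : (Fintype.card (Fin n → ZMod 2) : ℝ) = 2 ^ n := cardDD
  split <;> simp [hc]

lemma re_pow_le (f : DD n → ZMod 2) (a b : DD n) :
    ((pauli a b * proj (phaseState f)).trace).re ^ 4 ≤ (Sf f a b / 2 ^ n) ^ 4 := by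
  rw [trace_eq]
  have hre : (Complex.I ^ (∑ i, (a i * b i).val) * ((Sf f a b / 2 ^ n : ℝ) : ℂ)).re
      = (Complex.I ^ (∑ i, (a i * b i).val)).re * (Sf f a b / 2 ^ n) := by
    rw [mul_comm, Complex.re_ofReal_mul, mul_comm]
  rw [hre, mul_pow]
  have habs : |(Complex.I ^ (∑ i, (a i * b i).val)).re| ≤ 1 := by
    have h := Complex.abs_re_le_norm (Complex.I ^ (∑ i, (a i * b i).val))
    rwa [norm_pow, Complex.norm_I, one_pow] at h
  have h1 : (Complex.I ^ (∑ i, (a i * b i).val)).re ^ 4 ≤ 1 := by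
    have hnn : (0:ℝ) ≤ (Complex.I ^ (∑ i, (a i * b i).val)).re ^ 4 := by positivity
    calc (Complex.I ^ (∑ i, (a i * b i).val)).re ^ 4
        = |(Complex.I ^ (∑ i, (a i * b i).val)).re| ^ 4 := by
          rw [← abs_of_nonneg hnn, abs_pow]
      _ ≤ 1 := pow_le_one₀ (abs_nonneg _) habs
  have h2 : (0:ℝ) ≤ (Sf f a b / 2 ^ n) ^ 4 := by positivity
  nlinarith

lemma re_zero_zero (f : DD n → ZMod 2) :
    ((pauli (0 : DD n) 0 * proj (phaseState f)).trace).re = 1 := by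
  rw [trace_eq]
  have h0 : (∑ i, ((0 : DD n) i * (0 : DD n) i).val) = 0 := by simp
  rw [h0, pow_zero, one_mul, Sf_zero, if_pos rfl]
  have : ((2:ℝ) ^ n) / 2 ^ n = 1 := by
    field_simp
  rw [this]
  simp

/-- for a uniformly random function f,
E_f[2^{−M₂(ψ_f)}] = E_f[2^{−n} Σ_P tr⁴(Pψ_f)] ≤ 20/2^n. -/
theorem expected_linearized_M2_le {n : ℕ} :
    (Fintype.card ((Fin n → ZMod 2) → ZMod 2) : ℝ)⁻¹ *
        (∑ f : (Fin n → ZMod 2) → ZMod 2, (2 : ℝ) ^ (-(M2 (proj (phaseState f)))))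
      = (Fintype.card ((Fin n → ZMod 2) → ZMod 2) : ℝ)⁻¹ *
        (∑ f : (Fin n → ZMod 2) → ZMod 2, ((2 : ℝ) ^ n)⁻¹ *
          ∑ p : (Fin n → ZMod 2) × (Fin n → ZMod 2),
            (((pauli p.1 p.2 * proj (phaseState f)).trace).re) ^ 4) ∧
    (Fintype.card ((Fin n → ZMod 2) → ZMod 2) : ℝ)⁻¹ *
        (∑ f : (Fin n → ZMod 2) → ZMod 2, ((2 : ℝ) ^ n)⁻¹ *
          ∑ p : (Fin n → ZMod 2) × (Fin n → ZMod 2),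
            (((pauli p.1 p.2 * proj (phaseState f)).trace).re) ^ 4)
      ≤ 20 / 2 ^ n := by
  classical
  have h2n : (0:ℝ) < 2 ^ n := by positivity
  set C : ℝ := (Fintype.card ((Fin n → ZMod 2) → ZMod 2) : ℝ) with hCdef
  have hCpos : (0:ℝ) < C := by
    rw [hCdef]
    exact_mod_cast Fintype.card_pos
  -- positivity of the purity sum
  have hTpos : ∀ f : (Fin n → ZMod 2) → ZMod 2,
      (0:ℝ) < ((2 : ℝ) ^ n)⁻¹ *
        ∑ p : (Fin n → ZMod 2) × (Fin n → ZMod 2),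
          (((pauli p.1 p.2 * proj (phaseState f)).trace).re) ^ 4 := by
    intro f
    apply mul_pos (by positivity)
    have hterm : (1:ℝ) ≤ ∑ p : (Fin n → ZMod 2) × (Fin n → ZMod 2),
        (((pauli p.1 p.2 * proj (phaseState f)).trace).re) ^ 4 := by
      have h00 : (((pauli ((0,0) : (Fin n → ZMod 2) × (Fin n → ZMod 2)).1
          ((0,0) : (Fin n → ZMod 2) × (Fin n → ZMod 2)).2 * proj (phaseState f)).trace).re) ^ 4
          = 1 := by
        simp only []
        rw [re_zero_zero f]
        norm_num
      calc (1:ℝ) = (((pauli ((0,0) : (Fin n → ZMod 2) × (Fin n → ZMod 2)).1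
            ((0,0) : (Fin n → ZMod 2) × (Fin n → ZMod 2)).2 * proj (phaseState f)).trace).re) ^ 4 :=
            h00.symm
        _ ≤ _ := Finset.single_le_sum
            (f := fun p : (Fin n → ZMod 2) × (Fin n → ZMod 2) =>
              (((pauli p.1 p.2 * proj (phaseState f)).trace).re) ^ 4)
            (fun p _ => by positivity)
            (Finset.mem_univ ((0, 0) : (Fin n → ZMod 2) × (Fin n → ZMod 2)))
    linarith
  constructor
  · congr 1
    refine Finset.sum_congr rfl fun f _ => ?_
    have hM : M2 (proj (phaseState f)) = - Real.logb 2 (((2 : ℝ) ^ n)⁻¹ *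
        ∑ p : (Fin n → ZMod 2) × (Fin n → ZMod 2),
          (((pauli p.1 p.2 * proj (phaseState f)).trace).re) ^ 4) := rfl
    rw [hM, neg_neg]
    exact Real.rpow_logb (by norm_num) (by norm_num) (hTpos f)
  · -- the inequality
    have hX : ∑ f : (Fin n → ZMod 2) → ZMod 2,
        ∑ p : (Fin n → ZMod 2) × (Fin n → ZMod 2),
          (((pauli p.1 p.2 * proj (phaseState f)).trace).re) ^ 4 ≤ 13 * C := by
      rw [Finset.sum_comm]
      rw [Fintype.sum_prod_type]
      -- split off a = 0
      have hsplit := Finset.add_sum_erase (Finset.univ : Finset (Fin n → ZMod 2))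
        (fun a => ∑ b : Fin n → ZMod 2, ∑ f : (Fin n → ZMod 2) → ZMod 2,
          (((pauli a b * proj (phaseState f)).trace).re) ^ 4) (Finset.mem_univ 0)
      rw [← hsplit]
      have hzero : ∑ b : Fin n → ZMod 2, ∑ f : (Fin n → ZMod 2) → ZMod 2,
          (((pauli (0 : Fin n → ZMod 2) b * proj (phaseState f)).trace).re) ^ 4 ≤ C := by
        have hb : ∀ b : Fin n → ZMod 2, ∑ f : (Fin n → ZMod 2) → ZMod 2,
            (((pauli (0 : Fin n → ZMod 2) b * proj (phaseState f)).trace).re) ^ 4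
            ≤ if b = 0 then C else 0 := by
          intro b
          calc ∑ f : (Fin n → ZMod 2) → ZMod 2,
              (((pauli (0 : Fin n → ZMod 2) b * proj (phaseState f)).trace).re) ^ 4
              ≤ ∑ f : (Fin n → ZMod 2) → ZMod 2, (Sf f 0 b / 2 ^ n) ^ 4 :=
                Finset.sum_le_sum fun f _ => re_pow_le f 0 b
            _ = ∑ _f : (Fin n → ZMod 2) → ZMod 2, (if b = 0 then (1:ℝ) else 0) := by
                refine Finset.sum_congr rfl fun f _ => ?_
                rw [Sf_zero]
                split
                · rw [div_self (ne_of_gt h2n)]; norm_num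
                · norm_num
            _ = if b = 0 then C else 0 := by
                rw [Finset.sum_const, Finset.card_univ, nsmul_eq_mul]
                split <;> simp [hCdef]
        calc ∑ b : Fin n → ZMod 2, ∑ f : (Fin n → ZMod 2) → ZMod 2,
            (((pauli (0 : Fin n → ZMod 2) b * proj (phaseState f)).trace).re) ^ 4
            ≤ ∑ b : Fin n → ZMod 2, (if b = 0 then C else 0) :=
              Finset.sum_le_sum fun b _ => hb b
          _ = C := by rw [Finset.sum_ite_eq' Finset.univ (0 : Fin n → ZMod 2)]; simp
      have hne : ∀ a ∈ (Finset.univ : Finset (Fin n → ZMod 2)).erase 0,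
          ∑ b : Fin n → ZMod 2, ∑ f : (Fin n → ZMod 2) → ZMod 2,
            (((pauli a b * proj (phaseState f)).trace).re) ^ 4 ≤ 12 * C / 2 ^ n := by
        intro a hamem
        have ha : a ≠ 0 := Finset.ne_of_mem_erase hamem
        have hb : ∀ b : Fin n → ZMod 2, ∑ f : (Fin n → ZMod 2) → ZMod 2,
            (((pauli a b * proj (phaseState f)).trace).re) ^ 4 ≤ 12 * C / (2 ^ n) ^ 2 := by
          intro b
          calc ∑ f : (Fin n → ZMod 2) → ZMod 2,
              (((pauli a b * proj (phaseState f)).trace).re) ^ 4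
              ≤ ∑ f : (Fin n → ZMod 2) → ZMod 2, (Sf f a b / 2 ^ n) ^ 4 :=
                Finset.sum_le_sum fun f _ => re_pow_le f a b
            _ = (∑ f : (Fin n → ZMod 2) → ZMod 2, Sf f a b ^ 4) / (2 ^ n) ^ 4 := by
                rw [Finset.sum_div]
                refine Finset.sum_congr rfl fun f _ => ?_
                rw [div_pow]
            _ ≤ (12 * C * (2 ^ n) ^ 2) / (2 ^ n) ^ 4 := by
                apply div_le_div_of_nonneg_right ?_ (by positivity)
                exact sum_Sf4_le a b ha
            _ = 12 * C / (2 ^ n) ^ 2 := by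
                field_simp
        calc ∑ b : Fin n → ZMod 2, ∑ f : (Fin n → ZMod 2) → ZMod 2,
            (((pauli a b * proj (phaseState f)).trace).re) ^ 4
            ≤ ∑ _b : Fin n → ZMod 2, 12 * C / (2 ^ n) ^ 2 :=
              Finset.sum_le_sum fun b _ => hb b
          _ = 2 ^ n * (12 * C / (2 ^ n) ^ 2) := by
              rw [Finset.sum_const, Finset.card_univ, nsmul_eq_mul, cardDD]
          _ = 12 * C / 2 ^ n := by
              field_simp
      have herase : ∑ a ∈ (Finset.univ : Finset (Fin n → ZMod 2)).erase 0,
          ∑ b : Fin n → ZMod 2, ∑ f : (Fin n → ZMod 2) → ZMod 2,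
            (((pauli a b * proj (phaseState f)).trace).re) ^ 4 ≤ 12 * C := by
        calc ∑ a ∈ (Finset.univ : Finset (Fin n → ZMod 2)).erase 0,
            ∑ b : Fin n → ZMod 2, ∑ f : (Fin n → ZMod 2) → ZMod 2,
              (((pauli a b * proj (phaseState f)).trace).re) ^ 4
            ≤ ∑ _a ∈ (Finset.univ : Finset (Fin n → ZMod 2)).erase 0, (12 * C / 2 ^ n) :=
              Finset.sum_le_sum hne
          _ = ((Finset.univ : Finset (Fin n → ZMod 2)).erase 0).card * (12 * C / 2 ^ n) := by
              rw [Finset.sum_const, nsmul_eq_mul]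
          _ ≤ 2 ^ n * (12 * C / 2 ^ n) := by
              apply mul_le_mul_of_nonneg_right _ (by positivity)
              have h1 : ((Finset.univ : Finset (Fin n → ZMod 2)).erase 0).card
                  ≤ (Finset.univ : Finset (Fin n → ZMod 2)).card :=
                Finset.card_le_card (Finset.erase_subset _ _)
              have h2 : ((Finset.univ : Finset (Fin n → ZMod 2)).card : ℝ) = 2 ^ n := by
                rw [Finset.card_univ]; exact cardDD
              calc (((Finset.univ : Finset (Fin n → ZMod 2)).erase 0).card : ℝ)
                  ≤ ((Finset.univ : Finset (Fin n → ZMod 2)).card : ℝ) := by exact_mod_cast h1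
                _ = 2 ^ n := h2
          _ = 12 * C := by field_simp
      linarith
    -- finish
    have hsum : ∑ f : (Fin n → ZMod 2) → ZMod 2, ((2 : ℝ) ^ n)⁻¹ *
        ∑ p : (Fin n → ZMod 2) × (Fin n → ZMod 2),
          (((pauli p.1 p.2 * proj (phaseState f)).trace).re) ^ 4
        = ((2 : ℝ) ^ n)⁻¹ * ∑ f : (Fin n → ZMod 2) → ZMod 2,
            ∑ p : (Fin n → ZMod 2) × (Fin n → ZMod 2),
              (((pauli p.1 p.2 * proj (phaseState f)).trace).re) ^ 4 := by
      rw [Finset.mul_sum]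
    rw [hsum]
    calc C⁻¹ * (((2 : ℝ) ^ n)⁻¹ * ∑ f : (Fin n → ZMod 2) → ZMod 2,
          ∑ p : (Fin n → ZMod 2) × (Fin n → ZMod 2),
            (((pauli p.1 p.2 * proj (phaseState f)).trace).re) ^ 4)
        ≤ C⁻¹ * (((2 : ℝ) ^ n)⁻¹ * (13 * C)) := by
          apply mul_le_mul_of_nonneg_left _ (by positivity)
          exact mul_le_mul_of_nonneg_left hX (by positivity)
      _ = 13 / 2 ^ n := by
          field_simp
      _ ≤ 20 / 2 ^ n := by
          gcongr
          norm_num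
end Main
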